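/- Let ρ > 0 and let a be a nonzero quaternion with |a| < ρ. For any quaternion x with |x| = ρ and x ≠ a, the punctual ρ-Blaschke factor B(x) = (ρ² − x·aᶜ)·(ρ(x − a))⁻¹ satisfies |B(x)| = 1. -/
import Mathlib


/-- The punctual ρ-Blaschke factor at `a` sends the sphere of radius ρ into the
unit sphere. -/
theorem punctual_blaschke_norm_on_boundary (ρ : ℝ) (hρ : 0 < ρ)
    (a : Quaternion ℝ) (ha0 : a ≠ 0) (ha : ‖a‖ < ρ)
    (x : Quaternion ℝ) (hx : ‖x‖ = ρ) (hxa : x ≠ a) :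
    ‖(((ρ^2 : ℝ) : Quaternion ℝ) - x * star a) * ((ρ : ℝ) • (x - a))⁻¹‖ = 1 := by
  have hxa' : x - a ≠ 0 := sub_ne_zero.mpr hxa
  have h1 : ((ρ^2 : ℝ) : Quaternion ℝ) = x * star x := by
    rw [Quaternion.self_mul_star]
    congr 1
    rw [Quaternion.normSq_eq_norm_mul_self, hx, sq]
  have h2 : (((ρ^2 : ℝ) : Quaternion ℝ) - x * star a) = x * star (x - a) := by
    rw [h1, star_sub, mul_sub]
  rw [h2, norm_mul, norm_mul, norm_star, norm_inv, norm_smul, hx]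
  have hnorm : ‖x - a‖ ≠ 0 := norm_ne_zero_iff.mpr hxa'
  rw [Real.norm_eq_abs, abs_of_pos hρ]
  field_simp
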